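/- For f, g ∈ F₃ with central leaves l(f) = 1ⁿ and l(g) = 1ᵐ, the central leaf of f ⋄ g is l(f ⋄ g) = 1^{n+m}. -/

import Mathlib

open Set
open scoped Classical

noncomputable section

/-- An address: a finite word in the alphabet `{0,1,2}`. -/
abbrev Address : Type := List (Fin 3)

/-- Left endpoint of the triadic interval `I_α`. -/
def addrLeft : Address → ℝ
  | [] => 0
  | i :: α => ((i : ℕ) : ℝ) / 3 + addrLeft α / 3

/-- Length of the triadic interval `I_α`. -/
def addrLen (α : Address) : ℝ := (1 / 3 : ℝ) ^ α.length

/-- The triadic subinterval `I_α ⊆ [0,1]` determined by the address `α`. -/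
def Iaddr (α : Address) : Set ℝ := Set.Icc (addrLeft α) (addrLeft α + addrLen α)

/-- The linear orientation-preserving isomorphism `ψ_α : I_α → [0,1]`. -/
def psi (α : Address) (t : ℝ) : ℝ := (t - addrLeft α) / addrLen α

/-- The inverse `ψ_α⁻¹ : [0,1] → I_α`. -/
def psiInv (α : Address) (t : ℝ) : ℝ := addrLeft α + addrLen α * t

/-- `φ_α(f)` acts as `ψ_α⁻¹ ∘ f ∘ ψ_α` on `I_α` and as the identity elsewhere. -/
def phi (α : Address) (f : ℝ → ℝ) : ℝ → ℝ :=
  fun t => if t ∈ Iaddr α then psiInv α (f (psi α t)) else t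

/-- A triadic rational. -/
def IsTriadic (q : ℝ) : Prop := ∃ a : ℤ, ∃ n : ℕ, q = (a : ℝ) / 3 ^ n

/-- Membership in the Brown–Thompson group `F₃`, realized as piecewise-linear
homeomorphisms of `[0,1]` (extended by the identity to all of `ℝ`) with breakpoints
at triadic rationals and slopes powers of `3`. The group product is `f·g = g ∘ f`. -/
def IsF3 (f : ℝ → ℝ) : Prop :=
  (∀ t, t ∉ Set.Icc (0 : ℝ) 1 → f t = t) ∧
  Set.BijOn f (Set.Icc 0 1) (Set.Icc 0 1) ∧
  StrictMonoOn f (Set.Icc 0 1) ∧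
  ∃ breaks : Finset ℝ, (∀ b ∈ breaks, IsTriadic b) ∧
    ∀ x ∈ Set.Icc (0 : ℝ) 1, x ∉ breaks →
      ∃ (k : ℤ) (c : ℝ), IsTriadic c ∧
        ∀ᶠ y in nhdsWithin x (Set.Icc 0 1), f y = (3 : ℝ) ^ k * y + c

/-- `f` maps `I_α` linearly (preserving orientation, with triadic affine data)
onto the triadic interval `I_β`. -/
def IsTriadicLinearOn (f : ℝ → ℝ) (α β : Address) : Prop :=
  ∀ t ∈ Iaddr α, f t = psiInv β (psi α t)

/-- The depth of the maximal all-`i` leaf of the reduced domain tree of `f`: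
the least `n` such that `f` maps `I_{iⁿ}` linearly onto a triadic interval. -/
def leafExp (i : Fin 3) (f : ℝ → ℝ) : ℕ :=
  sInf {n : ℕ | ∃ β : Address, IsTriadicLinearOn f (List.replicate n i) β}

/-- The address `l(f) = 1ⁿ` of the central leaf of `f` (the leaf of the reduced
domain tree whose interval contains `1/2`). -/
def centralLeaf (f : ℝ → ℝ) : Address := List.replicate (leafExp 1 f) 1

/-- The central monoid operation `f ⋄ g = φ_{l(f)}(g) · f` (recall `a·b = b ∘ a`). -/
def diam (f g : ℝ → ℝ) : ℝ → ℝ := fun t => f (phi (centralLeaf f) g t)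

namespace CLD

lemma addrLen_pos (α : Address) : 0 < addrLen α := pow_pos (by norm_num) _

lemma addrLen_ne (α : Address) : addrLen α ≠ 0 := (addrLen_pos α).ne'

lemma addrLeft_nonneg (α : Address) : 0 ≤ addrLeft α := by
  induction α with
  | nil => simp [addrLeft]
  | cons i α ih =>
    simp only [addrLeft]
    positivity

lemma addrLeft_add_addrLen_le_one (α : Address) : addrLeft α + addrLen α ≤ 1 := by
  induction α with
  | nil => simp [addrLeft, addrLen]
  | cons i α ih =>
    have hi : ((i : ℕ) : ℝ) ≤ 2 := by
      have := i.2; exact_mod_cast Nat.lt_succ_iff.mp this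
    simp only [addrLeft, addrLen, List.length_cons, pow_succ] at *
    nlinarith [addrLen_pos α]

lemma addrLeft_append (α γ : Address) :
    addrLeft (α ++ γ) = addrLeft α + addrLen α * addrLeft γ := by
  induction α with
  | nil => simp [addrLeft, addrLen]
  | cons i α ih =>
    simp only [List.cons_append, List.append_eq, addrLeft, addrLen, List.length_cons, pow_succ]
    rw [ih]
    simp only [addrLen]
    ring

lemma addrLen_append (α γ : Address) : addrLen (α ++ γ) = addrLen α * addrLen γ := by
  simp [addrLen, pow_add]

lemma psi_psiInv (α : Address) (x : ℝ) : psi α (psiInv α x) = x := by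
  simp only [psi, psiInv, add_sub_cancel_left]
  exact mul_div_cancel_left₀ _ (addrLen_ne α)

lemma psiInv_psi (α : Address) (t : ℝ) : psiInv α (psi α t) = t := by
  simp only [psi, psiInv]
  rw [mul_div_cancel₀ _ (addrLen_ne α)]
  ring

lemma psiInv_append (α γ : Address) (x : ℝ) :
    psiInv (α ++ γ) x = psiInv α (psiInv γ x) := by
  simp [psiInv, addrLeft_append, addrLen_append]; ring

lemma psi_append (α γ : Address) (t : ℝ) :
    psi (α ++ γ) t = psi γ (psi α t) := by
  simp only [psi, addrLeft_append, addrLen_append]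
  rw [div_sub' (addrLen_ne α), div_div]
  congr 1
  ring

lemma Iaddr_subset_unit (α : Address) : Iaddr α ⊆ Set.Icc 0 1 := by
  intro t ht
  obtain ⟨h1, h2⟩ := ht
  exact ⟨le_trans (addrLeft_nonneg α) h1, le_trans h2 (addrLeft_add_addrLen_le_one α)⟩

lemma psi_mem (α : Address) {t : ℝ} (ht : t ∈ Iaddr α) : psi α t ∈ Set.Icc (0:ℝ) 1 := by
  obtain ⟨h1, h2⟩ := ht
  constructor
  · exact div_nonneg (by linarith) (addrLen_pos α).le
  · rw [psi, div_le_one (addrLen_pos α)]; linarith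

lemma psiInv_mem (α : Address) {x : ℝ} (hx : x ∈ Set.Icc (0:ℝ) 1) :
    psiInv α x ∈ Iaddr α := by
  obtain ⟨h1, h2⟩ := hx
  have := addrLen_pos α
  constructor
  · simp only [psiInv]; nlinarith
  · simp only [psiInv]; nlinarith

lemma mem_of_mem_append {α γ : Address} {t : ℝ} (ht : t ∈ Iaddr (α ++ γ)) :
    t ∈ Iaddr α := by
  obtain ⟨h1, h2⟩ := ht
  rw [addrLeft_append] at h1 h2
  rw [addrLen_append] at h2
  have hp := addrLen_pos α
  have h3 := addrLeft_nonneg γ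
  have h4 := addrLeft_add_addrLen_le_one γ
  constructor
  · nlinarith
  · nlinarith

lemma psi_mem_append {α γ : Address} {t : ℝ} (ht : t ∈ Iaddr (α ++ γ)) :
    psi α t ∈ Iaddr γ := by
  obtain ⟨h1, h2⟩ := ht
  rw [addrLeft_append] at h1 h2
  rw [addrLen_append] at h2
  have hp := addrLen_pos α
  constructor
  · rw [psi, le_div_iff₀ hp]; nlinarith
  · rw [psi, div_le_iff₀ hp]; nlinarith

lemma psiInv_mem_append {α γ : Address} {s : ℝ} (hs : s ∈ Iaddr γ) :
    psiInv α s ∈ Iaddr (α ++ γ) := by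
  obtain ⟨h1, h2⟩ := hs
  have hp := addrLen_pos α
  constructor
  · rw [addrLeft_append, psiInv]; nlinarith
  · rw [addrLeft_append, addrLen_append, psiInv]; nlinarith

lemma addrLeft_replicate_one (n : ℕ) :
    addrLeft (List.replicate n (1 : Fin 3)) = (1 - (1/3:ℝ)^n)/2 := by
  induction n with
  | zero => simp [addrLeft]
  | succ n ih =>
    rw [List.replicate_succ]
    simp only [addrLeft, ih, pow_succ, show ((1 : Fin 3) : ℕ) = 1 from rfl]
    push_cast
    ring

lemma addrLen_replicate (n : ℕ) (i : Fin 3) :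
    addrLen (List.replicate n i) = (1/3:ℝ)^n := by simp [addrLen]

lemma addrLeft_exists_int (α : Address) :
    ∃ b : ℤ, addrLeft α = (b : ℝ) / 3 ^ α.length := by
  induction α with
  | nil => exact ⟨0, by simp [addrLeft]⟩
  | cons i α ih =>
    obtain ⟨b, hb⟩ := ih
    refine ⟨(i : ℕ) * 3 ^ α.length + b, ?_⟩
    simp only [addrLeft, hb, List.length_cons, pow_succ]
    push_cast
    field_simp

lemma exists_address (ℓ : ℕ) : ∀ a : ℤ, 0 ≤ a → a < 3 ^ ℓ →
    ∃ β : Address, β.length = ℓ ∧ addrLeft β = (a : ℝ) / 3 ^ ℓ := by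
  induction ℓ with
  | zero =>
    intro a h1 h2
    have : a = 0 := by omega
    subst this
    exact ⟨[], rfl, by simp [addrLeft]⟩
  | succ ℓ ih =>
    intro a h1 h2
    have h3 : (0:ℤ) < 3 ^ ℓ := by positivity
    have hd : a / 3 ^ ℓ < 3 := by
      rw [Int.ediv_lt_iff_lt_mul h3]; rw [pow_succ] at h2; linarith
    have hd0 : 0 ≤ a / 3 ^ ℓ := Int.ediv_nonneg h1 h3.le
    obtain ⟨β, hlen, hleft⟩ := ih (a % 3 ^ ℓ) (Int.emod_nonneg a h3.ne') (Int.emod_lt_of_pos a h3)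
    refine ⟨⟨(a / 3 ^ ℓ).toNat, by omega⟩ :: β, by simp [hlen], ?_⟩
    simp only [addrLeft, hleft, hlen]
    have : ((a / 3 ^ ℓ).toNat : ℝ) = ((a / 3 ^ ℓ : ℤ) : ℝ) := by
      exact_mod_cast Int.toNat_of_nonneg hd0
    have key : a = 3 ^ ℓ * (a / 3 ^ ℓ) + a % 3 ^ ℓ := (Int.mul_ediv_add_emod a _).symm
    rw [this, show ((a:ℝ)) = 3 ^ ℓ * ((a / 3 ^ ℓ : ℤ) : ℝ) + ((a % 3 ^ ℓ : ℤ) : ℝ) by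
      exact_mod_cast key]
    rw [pow_succ]
    have h3r : ((3:ℝ)) ^ ℓ ≠ 0 := by positivity
    field_simp

end CLD

namespace CLD

/-- The set whose infimum is `leafExp 1 f`. -/
def S (f : ℝ → ℝ) : Set ℕ :=
  {n : ℕ | ∃ β : Address, IsTriadicLinearOn f (List.replicate n 1) β}

lemma leafExp_eq_sInf (f : ℝ → ℝ) : leafExp 1 f = sInf (S f) := rfl

lemma linear_append {f : ℝ → ℝ} {α β : Address} (h : IsTriadicLinearOn f α β)
    (γ : Address) : IsTriadicLinearOn f (α ++ γ) (β ++ γ) := by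
  intro t ht
  rw [h t (mem_of_mem_append ht), psiInv_append, psi_append, psiInv_psi]

lemma S_mono {f : ℝ → ℝ} {j j' : ℕ} (hj : j ∈ S f) (hle : j ≤ j') : j' ∈ S f := by
  obtain ⟨β, hβ⟩ := hj
  refine ⟨β ++ List.replicate (j' - j) 1, ?_⟩
  have : List.replicate j' (1 : Fin 3)
      = List.replicate j (1 : Fin 3) ++ List.replicate (j' - j) 1 := by
    rw [← List.replicate_add]
    congr 1
    omega
  rw [this]
  exact linear_append hβ _

lemma half_not_triadic : ¬ IsTriadic (1/2 : ℝ) := by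
  rintro ⟨a, N, hN⟩
  have h3 : ((3:ℝ)) ^ N ≠ 0 := by positivity
  have : (2 * a : ℝ) = 3 ^ N := by field_simp at hN; linarith
  have h2 : (2 * a : ℤ) = 3 ^ N := by exact_mod_cast this
  have : ¬ (2 ∣ (3:ℤ) ^ N) := by
    intro hdvd
    have := Int.Prime.dvd_pow' (p := 2) (by norm_num) hdvd
    norm_num at this
  exact this ⟨a, by linarith⟩

lemma map_zero_of_F3 {f : ℝ → ℝ} (hf : IsF3 f) : f 0 = 0 := by
  obtain ⟨-, hbij, hmono, -⟩ := hf
  obtain ⟨x, hx, hfx⟩ := hbij.2.2 (show (0:ℝ) ∈ Set.Icc (0:ℝ) 1 by norm_num)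
  rcases eq_or_lt_of_le hx.1 with h | h
  · rw [← h] at hfx; exact hfx
  · have h0 : (0:ℝ) ∈ Set.Icc (0:ℝ) 1 := by norm_num
    have := hmono h0 hx h
    have hf0 := (hbij.1 h0).1
    rw [hfx] at this
    linarith

lemma map_one_of_F3 {f : ℝ → ℝ} (hf : IsF3 f) : f 1 = 1 := by
  obtain ⟨-, hbij, hmono, -⟩ := hf
  obtain ⟨x, hx, hfx⟩ := hbij.2.2 (show (1:ℝ) ∈ Set.Icc (0:ℝ) 1 by norm_num)
  rcases eq_or_lt_of_le hx.2 with h | h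
  · rw [h] at hfx; exact hfx
  · have h1 : (1:ℝ) ∈ Set.Icc (0:ℝ) 1 := by norm_num
    have := hmono hx h1 h
    have hf1 := (hbij.1 h1).2
    rw [hfx] at this
    linarith

/-- Key analytic fact: for an `F₃` map, the set `S f` is nonempty. -/
lemma S_nonempty {f : ℝ → ℝ} (hf : IsF3 f) : (S f).Nonempty := by
  obtain ⟨hid, hbij, hmono, breaks, hbt, hbreak⟩ := hf
  have hhalf : (1/2 : ℝ) ∈ Set.Icc (0:ℝ) 1 := by norm_num
  have hnb : (1/2 : ℝ) ∉ breaks := fun hb => half_not_triadic (hbt _ hb)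
  obtain ⟨k, c, hc, hev⟩ := hbreak (1/2) hhalf hnb
  -- turn the eventual statement into an ε-ball statement
  have hmem : Set.Icc (0:ℝ) 1 ∈ nhds (1/2 : ℝ) := Icc_mem_nhds (by norm_num) (by norm_num)
  rw [nhdsWithin_eq_nhds.mpr hmem] at hev
  rw [Metric.eventually_nhds_iff] at hev
  obtain ⟨ε, hε, hball⟩ := hev
  obtain ⟨p, N, hpN⟩ := hc
  -- choose n large
  obtain ⟨n₀, hn₀⟩ := exists_pow_lt_of_lt_one hε (show (1/3:ℝ) < 1 by norm_num)
  set n : ℕ := max n₀ (N + k.natAbs) with hn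
  have hsmall : (1/3:ℝ) ^ n < ε :=
    lt_of_le_of_lt (pow_le_pow_of_le_one (by norm_num) (by norm_num) (le_max_left _ _)) hn₀
  -- the affine formula holds on I_{1^n}
  set α : Address := List.replicate n 1 with hα
  have hL : addrLeft α = (1 - (1/3:ℝ)^n)/2 := addrLeft_replicate_one n
  have hlen : addrLen α = (1/3:ℝ)^n := addrLen_replicate n 1
  have haff : ∀ t ∈ Iaddr α, f t = (3:ℝ)^k * t + c := by
    intro t ht
    apply hball
    obtain ⟨h1, h2⟩ := ht
    rw [hL] at h1
    rw [hL, hlen] at h2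
    rw [Real.dist_eq, abs_lt]
    constructor <;> nlinarith [pow_pos (show (0:ℝ) < 1/3 by norm_num) n]
  -- the exponent of the image interval
  have hkn : (k : ℤ) ≤ (n : ℤ) := by
    have : k ≤ (k.natAbs : ℤ) := Int.le_natAbs
    have h2 : (N + k.natAbs : ℕ) ≤ n := le_max_right _ _
    omega
  set ℓ : ℕ := (n - k).toNat with hℓ
  have hℓk : (ℓ : ℤ) = (n : ℤ) - k := Int.toNat_of_nonneg (by omega)
  have hℓN : N ≤ ℓ := by omega
  -- the left endpoint of the image
  set L : ℝ := addrLeft α with hLdef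
  set e : ℝ := (3:ℝ)^k * L + c with he
  have hLmem : L ∈ Iaddr α := ⟨le_refl _, by nlinarith [addrLen_pos α]⟩
  have hRmem : L + addrLen α ∈ Iaddr α := ⟨by nlinarith [addrLen_pos α], le_refl _⟩
  have hfL : f L = e := haff L hLmem
  have hLI : L ∈ Set.Icc (0:ℝ) 1 := Iaddr_subset_unit α hLmem
  have hRI : L + addrLen α ∈ Set.Icc (0:ℝ) 1 := Iaddr_subset_unit α hRmem
  have he0 : 0 ≤ e := by rw [← hfL]; exact (hbij.1 hLI).1
  have he1 : e < 1 := by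
    have hlt : f L < f (L + addrLen α) :=
      hmono hLI hRI (by nlinarith [addrLen_pos α])
    have := (hbij.1 hRI).2
    rw [hfL] at hlt
    linarith
  -- e = a / 3^ℓ for an integer a
  obtain ⟨j, hj⟩ : ∃ j : ℤ, (3:ℝ)^n = 2 * j + 1 := by
    obtain ⟨j, hj⟩ := Odd.pow (n := n) (show Odd (3:ℤ) by decide)
    exact ⟨j, by exact_mod_cast hj⟩
  set a : ℤ := j + p * 3 ^ (ℓ - N) with ha
  have hea : e = (a : ℝ) / 3 ^ ℓ := by
    have h3n : ((3:ℝ)) ^ n ≠ 0 := by positivity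
    have h3ℓ : ((3:ℝ)) ^ ℓ ≠ 0 := by positivity
    have h3N : ((3:ℝ)) ^ N ≠ 0 := by positivity
    have hzp : (3:ℝ)^(k:ℤ) * (3:ℝ)^(ℓ:ℤ) = (3:ℝ)^(n:ℤ) := by
      rw [← zpow_add₀ (show (3:ℝ) ≠ 0 by norm_num)]
      congr 1
      omega
    have hsplit : ((3:ℝ)) ^ ℓ = 3 ^ (ℓ - N) * 3 ^ N := by
      rw [← pow_add]
      congr 1
      omega
    have h13 : ((1:ℝ)/3) ^ n = ((3:ℝ)^n)⁻¹ := by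
      rw [one_div, inv_pow]
    rw [he, hpN, hL, h13, ha]
    push_cast
    rw [eq_div_iff h3ℓ]
    have : (3:ℝ)^k * ((1 - ((3:ℝ)^n)⁻¹)/2) * (3:ℝ)^ℓ
        = ((3:ℝ)^(k:ℤ) * (3:ℝ)^(ℓ:ℤ)) * ((1 - ((3:ℝ)^n)⁻¹)/2) := by
      rw [zpow_natCast]
      ring
    rw [add_mul, this, hzp, zpow_natCast, hsplit]
    field_simp
    linear_combination hj
  have ha0 : 0 ≤ a := by
    have h3ℓ : (0:ℝ) < 3 ^ ℓ := by positivity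
    have : (0:ℝ) ≤ (a:ℝ) / 3 ^ ℓ := hea ▸ he0
    have := (div_nonneg_iff.mp this)
    rcases this with ⟨h, -⟩ | ⟨-, h⟩
    · exact_mod_cast h
    · nlinarith
  have ha3 : a < 3 ^ ℓ := by
    have h3ℓ : (0:ℝ) < 3 ^ ℓ := by positivity
    have : (a:ℝ) / 3 ^ ℓ < 1 := hea ▸ he1
    have : (a:ℝ) < 3 ^ ℓ := by rwa [div_lt_one h3ℓ] at this
    exact_mod_cast this
  obtain ⟨β, hβlen, hβleft⟩ := exists_address ℓ a ha0 ha3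
  refine ⟨n, β, ?_⟩
  intro t ht
  rw [haff t ht]
  rw [psiInv, psi, hβleft, ← hea, hlen]
  have h3n : ((3:ℝ)) ^ n ≠ 0 := by positivity
  have hlenβ : addrLen β = (1/3:ℝ)^ℓ := by rw [addrLen, hβlen]
  have hzp : (3:ℝ)^(k:ℤ) * (3:ℝ)^(ℓ:ℤ) = (3:ℝ)^(n:ℤ) := by
    rw [← zpow_add₀ (show (3:ℝ) ≠ 0 by norm_num)]
    congr 1
    omega
  rw [hlenβ, he]
  have h13n : ((1:ℝ)/3) ^ n = ((3:ℝ)^n)⁻¹ := by rw [one_div, inv_pow]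
  have h13ℓ : ((1:ℝ)/3) ^ ℓ = ((3:ℝ)^ℓ)⁻¹ := by rw [one_div, inv_pow]
  rw [h13n, h13ℓ, div_eq_mul_inv, inv_inv]
  have : ((3:ℝ)^ℓ)⁻¹ * ((t - L) * (3:ℝ)^n) = (3:ℝ)^k * (t - L) := by
    have h3ℓ : ((3:ℝ)) ^ ℓ ≠ 0 := by positivity
    rw [← zpow_natCast (3:ℝ) n, ← hzp]
    rw [zpow_natCast]
    field_simp
  rw [this]
  ring

end CLD

open CLD

/-- central leaves add under `⋄`: if `l(f) = 1ⁿ` and `l(g) = 1ᵐ`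
then `l(f ⋄ g) = 1^(n+m)`. -/
theorem centralLeaf_diam (f g : ℝ → ℝ) (hf : IsF3 f) (hg : IsF3 g) (n m : ℕ)
    (hn : centralLeaf f = List.replicate n (1 : Fin 3))
    (hm : centralLeaf g = List.replicate m (1 : Fin 3)) :
    centralLeaf (diam f g) = List.replicate (n + m) (1 : Fin 3) := by
  classical
  have hn' : leafExp 1 f = n := by
    have := congrArg List.length hn
    simpa [centralLeaf] using this
  have hm' : leafExp 1 g = m := by
    have := congrArg List.length hm
    simpa [centralLeaf] using this
  have hnS : n ∈ S f := by
    rw [← hn', leafExp_eq_sInf]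
    exact Nat.sInf_mem (S_nonempty hf)
  have hmS : m ∈ S g := by
    rw [← hm', leafExp_eq_sInf]
    exact Nat.sInf_mem (S_nonempty hg)
  obtain ⟨βf, hβf⟩ := hnS
  obtain ⟨βg, hβg⟩ := hmS
  rcases Nat.eq_zero_or_pos m with hm0 | hmpos
  · -- m = 0 : g is the identity on [0,1] and diam f g = f
    subst hm0
    have hgid : ∀ s ∈ Set.Icc (0:ℝ) 1, g s = s := by
      have h0 : (0:ℝ) ∈ Iaddr ([] : Address) := by
        constructor <;> simp [addrLeft, addrLen]
      have h1 : (1:ℝ) ∈ Iaddr ([] : Address) := by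
        constructor <;> simp [addrLeft, addrLen]
      have hg0 : addrLeft βg = 0 := by
        have := hβg 0 h0
        rw [map_zero_of_F3 hg] at this
        simp [psi, psiInv, addrLeft, addrLen] at this
        linarith
      have hg1 : addrLen βg = 1 := by
        have h := hβg 1 h1
        rw [map_one_of_F3 hg] at h
        simp [psi, psiInv, addrLeft, addrLen, hg0] at h
        rw [addrLen, one_div, inv_pow, h, inv_one]
      intro s hs
      have hs' : s ∈ Iaddr ([] : Address) := by
        simpa [Iaddr, addrLeft, addrLen] using hs
      rw [hβg s hs', psi, psiInv, hg0, hg1]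
      simp [addrLeft, addrLen]
    have hphi : phi (centralLeaf f) g = id := by
      funext t
      simp only [phi, id_eq]
      split_ifs with ht
      · rw [hgid _ (psi_mem _ ht), psiInv_psi]
      · rfl
    have : diam f g = f := by
      funext t
      simp only [diam, hphi, id_eq]
    rw [this, hn, Nat.add_zero]
  · -- main case : m ≥ 1
    set h : ℝ → ℝ := diam f g with hh
    have hmemb : IsTriadicLinearOn h (List.replicate (n + m) 1) (βf ++ βg) := by
      intro t ht
      rw [List.replicate_add] at ht
      have ht1 : t ∈ Iaddr (List.replicate n 1) := mem_of_mem_append ht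
      have hpsig : psi (List.replicate n 1) t ∈ Iaddr (List.replicate m 1) :=
        psi_mem_append ht
      show f (phi (centralLeaf f) g t) = _
      rw [hn]
      simp only [phi]
      rw [if_pos ht1, hβg _ hpsig]
      have hin01 : psiInv βg (psi (List.replicate m 1) (psi (List.replicate n 1) t))
          ∈ Set.Icc (0:ℝ) 1 :=
        Iaddr_subset_unit βg (psiInv_mem βg (psi_mem _ hpsig))
      rw [hβf _ (psiInv_mem _ hin01), psi_psiInv]
      rw [List.replicate_add, psiInv_append, psi_append]
    have hub : sInf (S h) ≤ n + m := Nat.sInf_le ⟨βf ++ βg, hmemb⟩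
    have hlb : ¬ sInf (S h) < n + m := by
      intro hlt
      have hmem' : sInf (S h) ∈ S h := Nat.sInf_mem ⟨n + m, βf ++ βg, hmemb⟩
      have h1 : n + m - 1 ∈ S h := S_mono hmem' (by omega)
      obtain ⟨β, hβ⟩ := h1
      -- derive a triadic-linear structure for g on 1^(m-1)
      have hrep : List.replicate (n + m - 1) (1 : Fin 3)
          = List.replicate n 1 ++ List.replicate (m - 1) 1 := by
        rw [← List.replicate_add]
        congr 1
        omega
      have key : ∀ s ∈ Iaddr (List.replicate (m - 1) (1 : Fin 3)),
          psiInv βf (g s) = psiInv β (psi (List.replicate (m - 1) 1) s) := by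
        intro s hs
        set t := psiInv (List.replicate n 1) s with htdef
        have htmem : t ∈ Iaddr (List.replicate n 1 ++ List.replicate (m - 1) 1) :=
          psiInv_mem_append hs
        have h1 := hβ t (by rw [hrep]; exact htmem)
        have ht1 : t ∈ Iaddr (List.replicate n 1) := mem_of_mem_append htmem
        have hpsit : psi (List.replicate n 1) t = s := psi_psiInv _ _
        have hgs : g s ∈ Set.Icc (0:ℝ) 1 := hg.2.1.1 (Iaddr_subset_unit _ hs)
        have h2 : h t = psiInv βf (g s) := by
          show f (phi (centralLeaf f) g t) = _
          rw [hn]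
          simp only [phi]
          rw [if_pos ht1, hpsit, hβf _ (psiInv_mem _ hgs), psi_psiInv]
        rw [h2] at h1
        rw [h1, hrep, psi_append, hpsit]
      have gform : ∀ s ∈ Iaddr (List.replicate (m - 1) (1 : Fin 3)),
          g s = psi βf (psiInv β (psi (List.replicate (m - 1) 1) s)) := by
        intro s hs
        rw [← key s hs, psi_psiInv]
      -- endpoints
      set L' : ℝ := addrLeft (List.replicate (m - 1) (1 : Fin 3)) with hL'
      set len' : ℝ := addrLen (List.replicate (m - 1) (1 : Fin 3)) with hlen'
      have hlenpos : 0 < len' := addrLen_pos _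
      have hLmem : L' ∈ Iaddr (List.replicate (m - 1) (1 : Fin 3)) :=
        ⟨le_refl _, by linarith⟩
      have hRmem : L' + len' ∈ Iaddr (List.replicate (m - 1) (1 : Fin 3)) :=
        ⟨by linarith, le_refl _⟩
      have hpsiL : psi (List.replicate (m - 1) (1 : Fin 3)) L' = 0 := by
        rw [psi, ← hL', sub_self, zero_div]
      have hpsiR : psi (List.replicate (m - 1) (1 : Fin 3)) (L' + len') = 1 := by
        rw [psi, ← hL', ← hlen', add_sub_cancel_left, div_self hlenpos.ne']
      have hgL : g L' = psi βf (addrLeft β) := by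
        rw [gform L' hLmem, hpsiL]
        congr 1
        simp [psiInv]
      have hgR : g L' + addrLen β / addrLen βf = g (L' + len') := by
        rw [gform L' hLmem, gform _ hRmem, hpsiL, hpsiR]
        simp only [psi, psiInv]
        field_simp
        ring
      have hgL0 : 0 ≤ g L' := (hg.2.1.1 (Iaddr_subset_unit _ hLmem)).1
      have hgR1 : g (L' + len') ≤ 1 := (hg.2.1.1 (Iaddr_subset_unit _ hRmem)).2
      -- the slope is at most 1, so |β| ≥ |βf|
      have hslope : addrLen β ≤ addrLen βf := by
        have h1 : addrLen β / addrLen βf ≤ 1 := by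
          rw [← hgR] at hgR1
          linarith
        have h2 := addrLen_pos βf
        rw [div_le_one h2] at h1
        exact h1
      have hpq : βf.length ≤ β.length := by
        by_contra hcon
        push_neg at hcon
        have := pow_lt_pow_right_of_lt_one₀ (show (0:ℝ) < 1/3 by norm_num)
          (show (1/3:ℝ) < 1 by norm_num) hcon
        rw [addrLen, addrLen] at hslope
        linarith
      set ℓ' : ℕ := β.length - βf.length with hℓ'
      have hq : β.length = βf.length + ℓ' := by omega
      have hlenratio : addrLen β / addrLen βf = (1/3:ℝ) ^ ℓ' := by
        rw [addrLen, addrLen, hq, pow_add]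
        have : ((1:ℝ)/3) ^ βf.length ≠ 0 := by positivity
        field_simp
      obtain ⟨A, hA⟩ := addrLeft_exists_int βf
      obtain ⟨B, hB⟩ := addrLeft_exists_int β
      set a' : ℤ := B - A * 3 ^ ℓ' with ha'
      have hE : psi βf (addrLeft β) = (a' : ℝ) / 3 ^ ℓ' := by
        rw [psi, hA, hB, addrLen, ha', hq, pow_add]
        have h1 : ((3:ℝ)) ^ βf.length ≠ 0 := by positivity
        have h2 : ((3:ℝ)) ^ ℓ' ≠ 0 := by positivity
        have h3 : ((1:ℝ)/3) ^ βf.length = ((3:ℝ) ^ βf.length)⁻¹ := by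
          rw [one_div, inv_pow]
        rw [h3]
        push_cast
        field_simp
      have hE0 : 0 ≤ (a' : ℝ) / 3 ^ ℓ' := by rw [← hE, ← hgL]; exact hgL0
      have hE1 : (a' : ℝ) / 3 ^ ℓ' < 1 := by
        have := hgR ▸ hgR1
        rw [← hgR, hgL, hE, hlenratio] at hgR1
        have hpow : (0:ℝ) < (1/3:ℝ) ^ ℓ' := by positivity
        linarith
      have h3ℓ : (0:ℝ) < 3 ^ ℓ' := by positivity
      have ha0 : 0 ≤ a' := by
        by_contra hcon
        push_neg at hcon
        have hneg : ((a':ℤ):ℝ) < 0 := by exact_mod_cast hcon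
        exact absurd hE0 (not_le.mpr (div_neg_of_neg_of_pos hneg h3ℓ))
      have ha3 : a' < 3 ^ ℓ' := by
        have : (a' : ℝ) < 3 ^ ℓ' := by
          rw [div_lt_one h3ℓ] at hE1
          exact hE1
        exact_mod_cast this
      obtain ⟨β', hβ'len, hβ'left⟩ := exists_address ℓ' a' ha0 ha3
      have hx : ∀ x : ℝ, psi βf (psiInv β x) = psiInv β' x := by
        intro x
        have hb1 : addrLen β' = addrLen β / addrLen βf := by
          rw [addrLen, hβ'len, ← hlenratio]
        have hb2 : addrLeft β' = (addrLeft β - addrLeft βf) / addrLen βf := by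
          rw [hβ'left, ← hE]
          rfl
        simp only [psi, psiInv, hb1, hb2]
        have hbp := addrLen_pos βf
        field_simp
        ring
      have hfinal : IsTriadicLinearOn g (List.replicate (m - 1) 1) β' := by
        intro s hs
        rw [gform s hs, hx]
      have : sInf (S g) ≤ m - 1 := Nat.sInf_le ⟨β', hfinal⟩
      rw [← leafExp_eq_sInf, hm'] at this
      omega
    have hfin : leafExp 1 h = n + m := by
      rw [leafExp_eq_sInf]
      omega
    show centralLeaf h = _
    rw [centralLeaf, hfin]
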